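/- The commutator rule decides a partition: for an r-th maximal bi-subalgebra B^[r] of su(2^p) (0 ≤ r ≤ 2p), the commutator subspaces W(B) for B ∈ 𝒢(B^[r]) are pairwise disjoint, nonempty, and their union is all of V; there are exactly 2^(2p−r) of them, and each W(B) has exactly 2^r elements. -/

import Mathlib

open scoped BigOperators

namespace QAP

/-- The index group `V = Z₂^p × Z₂^p` whose elements `(ζ,α)` label the
spinor generators `S^ζ_α` of `su(2^p)`. -/
abbrev V (p : ℕ) : Type := (Fin p → ZMod 2) × (Fin p → ZMod 2)

/-- The symplectic pairing `ω((ζ,α),(η,β)) = ζ·β + η·α` over `ZMod 2`. -/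
def omega {p : ℕ} (v w : V p) : ZMod 2 :=
  (∑ k, v.1 k * w.2 k) + (∑ k, w.1 k * v.2 k)

/-- `B` is an `r`-th maximal bi-subalgebra of `su(2^p)`: it is obtained from
`V` by a descending chain of `r` successive index-2 subgroups. -/
def IsRthMax {p : ℕ} (r : ℕ) (B : AddSubgroup (V p)) : Prop :=
  ∃ c : ℕ → AddSubgroup (V p), c 0 = ⊤ ∧ c r = B ∧
    ∀ i < r, c (i + 1) ≤ c i ∧ (c (i + 1)).relIndex (c i) = 2

/-- `𝒢(G)`: the family consisting of `G` together with all its index-2 subgroups. -/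
def GFam {p : ℕ} (G : AddSubgroup (V p)) : Set (AddSubgroup (V p)) :=
  {H | H = G ∨ (H ≤ G ∧ H.relIndex G = 2)}

/-- The commutator subspace `W(B)` determined by `B` relative to `B^[r]`:
elements of `V` commuting with exactly the members of `B` inside `B^[r]`. -/
def Wspace {p : ℕ} (Br B : AddSubgroup (V p)) : Set (V p) :=
  {v | {b : V p | b ∈ Br ∧ omega v b = 0} = (B : Set (V p))}

/-- The `⊓` operation on subsets of a subgroup `G`:
`B₁ ⊓ B₂ = (B₁ ∩ B₂) ∪ ((G \ B₁) ∩ (G \ B₂))`. -/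
def sqcap {p : ℕ} (G : AddSubgroup (V p)) (B₁ B₂ : Set (V p)) : Set (V p) :=
  (B₁ ∩ B₂) ∪ (((G : Set (V p)) \ B₁) ∩ (((G : Set (V p))) \ B₂))

section Helpers

variable {p : ℕ}

lemma zmod2_cases (x : ZMod 2) : x = 0 ∨ x = 1 := by revert x; decide

lemma zmod2_eq_of_iff {x y : ZMod 2} (h : (x = 0 ↔ y = 0)) : x = y := by
  rcases zmod2_cases x with hx | hx <;> rcases zmod2_cases y with hy | hy <;> simp_all

lemma zmod2_add_self (x : ZMod 2) : x + x = 0 := by revert x; decide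

lemma Vneg_eq_self (w : V p) : -w = w := by
  have h : ∀ a : ZMod 2, -a = a := by decide
  refine Prod.ext ?_ ?_ <;> funext k <;> simp [h]

lemma omega_comm (v w : V p) : omega v w = omega w v := by
  simp [omega, add_comm]

lemma omega_add_right (v w w' : V p) : omega v (w + w') = omega v w + omega v w' := by
  simp only [omega, Prod.fst_add, Prod.snd_add, Pi.add_apply, mul_add, add_mul,
    Finset.sum_add_distrib]
  ring

lemma omega_add_left (v v' w : V p) : omega (v + v') w = omega v w + omega v' w := by
  rw [omega_comm, omega_add_right, omega_comm w v, omega_comm w v']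

lemma omega_neg_left (v w : V p) : omega (-v) w = omega v w := by rw [Vneg_eq_self]

lemma omega_zero_right (v : V p) : omega v 0 = 0 := by simp [omega]

lemma omega_zero_left (w : V p) : omega 0 w = 0 := by simp [omega]

lemma omega_smul_left (c : ZMod 2) (v w : V p) : omega (c • v) w = c * omega v w := by
  simp only [omega, Prod.smul_fst, Prod.smul_snd, Pi.smul_apply, smul_eq_mul, mul_add,
    Finset.mul_sum]
  congr 1 <;> exact Finset.sum_congr rfl fun k _ => by ring

def Omega (p : ℕ) : LinearMap.BilinForm (ZMod 2) (V p) :=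
  LinearMap.mk₂ (ZMod 2) omega omega_add_left
    (fun c v w => by rw [omega_smul_left, smul_eq_mul]) omega_add_right
    (fun c v w => by rw [omega_comm, omega_smul_left, omega_comm, smul_eq_mul])

@[simp] lemma Omega_apply (v w : V p) : Omega p v w = omega v w := rfl

lemma Omega_isRefl : (Omega p).IsRefl := fun x y h => by
  rw [Omega_apply, omega_comm]; exact h

lemma Omega_nondeg : (Omega p).Nondegenerate := by
  refine (LinearMap.IsRefl.nondegenerate_iff_separatingLeft Omega_isRefl).mpr ?_
  intro v h
  have h1 : ∀ k, v.1 k = 0 := by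
    intro k
    have := h (0, Pi.single k 1)
    simpa [omega, Pi.single_apply, mul_ite, Finset.sum_ite_eq'] using this
  have h2 : ∀ k, v.2 k = 0 := by
    intro k
    have := h (Pi.single k 1, 0)
    simpa [omega, Pi.single_apply, ite_mul, Finset.sum_ite_eq'] using this
  refine Prod.ext ?_ ?_ <;> funext k <;> simp [h1, h2]

/-- The subgroup of elements of `Br` commuting with `v`. -/
def Kv (Br : AddSubgroup (V p)) (v : V p) : AddSubgroup (V p) where
  carrier := {b | b ∈ Br ∧ omega v b = 0}
  zero_mem' := ⟨zero_mem _, omega_zero_right v⟩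
  add_mem' := fun ha hb => ⟨add_mem ha.1 hb.1, by
    rw [omega_add_right, ha.2, hb.2, add_zero]⟩
  neg_mem' := fun {a} ha => by
    simpa [Vneg_eq_self] using ha

lemma mem_Kv {Br : AddSubgroup (V p)} {v b : V p} :
    b ∈ Kv Br v ↔ b ∈ Br ∧ omega v b = 0 := Iff.rfl

lemma mem_Wspace {Br B : AddSubgroup (V p)} {v : V p} :
    v ∈ Wspace Br B ↔ Kv Br v = B := by
  simp only [Wspace, Set.mem_setOf_eq]
  constructor
  · intro h
    exact SetLike.coe_injective h
  · intro h
    rw [← h]; rfl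

lemma card_V : Nat.card (V p) = 2 ^ (2 * p) := by
  rw [Nat.card_eq_fintype_card, Fintype.card_prod, Fintype.card_fun, ZMod.card,
    Fintype.card_fin, ← pow_add, two_mul]

lemma card_chain {r : ℕ} (hr : r ≤ 2 * p) {Br : AddSubgroup (V p)} (hBr : IsRthMax r Br) :
    Nat.card Br = 2 ^ (2 * p - r) := by
  obtain ⟨c, h0, hrB, hstep⟩ := hBr
  suffices h : ∀ i, i ≤ r → Nat.card (c i) = 2 ^ (2 * p - i) by
    rw [← hrB]; exact h r le_rfl
  intro i
  induction i with
  | zero =>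
    intro _
    rw [h0, Nat.sub_zero, ← card_V]
    exact Nat.card_congr AddSubgroup.topEquiv.toEquiv
  | succ n ih =>
    intro hi
    have hn : n < r := hi
    obtain ⟨hle, hrel⟩ := hstep n hn
    have e1 : Nat.card ((c (n + 1)).addSubgroupOf (c n)) = Nat.card (c (n + 1)) :=
      Nat.card_congr (AddSubgroup.addSubgroupOfEquivOfLe hle).toEquiv
    have e2 : Nat.card ((c (n + 1)).addSubgroupOf (c n)) *
        ((c (n + 1)).addSubgroupOf (c n)).index = Nat.card (c n) :=
      AddSubgroup.card_mul_index _
    have hidx : ((c (n + 1)).addSubgroupOf (c n)).index = 2 := hrel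
    rw [e1, hidx, ih (le_of_lt hn)] at e2
    have hexp : 2 * p - n = (2 * p - (n + 1)) + 1 := by omega
    rw [hexp, pow_succ] at e2
    exact Nat.eq_of_mul_eq_mul_right (by norm_num) e2

/-- `Br` as a `ZMod 2`-submodule. -/
def toSub (Br : AddSubgroup (V p)) : Submodule (ZMod 2) (V p) :=
  AddSubgroup.toZModSubmodule 2 Br

lemma mem_toSub {Br : AddSubgroup (V p)} {x : V p} : x ∈ toSub Br ↔ x ∈ Br := Iff.rfl

/-- The symplectic complement of `Br`. -/
def Nperp (Br : AddSubgroup (V p)) : AddSubgroup (V p) :=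
  ((Omega p).orthogonal (toSub Br)).toAddSubgroup

lemma mem_Nperp {Br : AddSubgroup (V p)} {u : V p} :
    u ∈ Nperp Br ↔ ∀ b ∈ Br, omega u b = 0 := by
  constructor
  · intro h b hb
    have := h b hb
    rw [omega_comm]
    exact this
  · intro h b hb
    have := h b hb
    rw [omega_comm] at this
    exact this

lemma card_submodule_eq_pow (W : Submodule (ZMod 2) (V p)) :
    Nat.card W = 2 ^ Module.finrank (ZMod 2) W := by
  letI : Fintype W := Fintype.ofFinite _
  rw [Nat.card_eq_fintype_card]
  have h := Module.card_eq_pow_finrank (K := ZMod 2) (V := W)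
  rwa [ZMod.card] at h

lemma finrank_V : Module.finrank (ZMod 2) (V p) = 2 * p := by
  have h := Module.card_eq_pow_finrank (K := ZMod 2) (V := V p)
  rw [ZMod.card, ← Nat.card_eq_fintype_card, card_V] at h
  exact (Nat.pow_right_injective le_rfl h).symm

lemma card_toSub (Br : AddSubgroup (V p)) : Nat.card (toSub Br) = Nat.card Br :=
  Nat.card_congr (Equiv.subtypeEquivRight fun _ => Iff.rfl)

lemma finrank_toSub {r : ℕ} (hr : r ≤ 2 * p) {Br : AddSubgroup (V p)} (hBr : IsRthMax r Br) :
    Module.finrank (ZMod 2) (toSub Br) = 2 * p - r := by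
  have h1 := card_submodule_eq_pow (toSub Br)
  rw [card_toSub, card_chain hr hBr] at h1
  exact (Nat.pow_right_injective le_rfl h1).symm

lemma card_Nperp {r : ℕ} (hr : r ≤ 2 * p) {Br : AddSubgroup (V p)} (hBr : IsRthMax r Br) :
    Nat.card (Nperp Br) = 2 ^ r := by
  have hfr : Module.finrank (ZMod 2) ((Omega p).orthogonal (toSub Br)) = r := by
    rw [LinearMap.BilinForm.finrank_orthogonal Omega_nondeg,
      finrank_V, finrank_toSub hr hBr]
    omega
  have h := card_submodule_eq_pow ((Omega p).orthogonal (toSub Br))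
  rw [hfr] at h
  rw [← h]
  exact Nat.card_congr (Equiv.subtypeEquivRight fun _ => Iff.rfl)

lemma exists_omega_eq (g : Module.Dual (ZMod 2) (V p)) : ∃ v : V p, ∀ w, omega v w = g w := by
  classical
  have hfin : Finite (Module.Dual (ZMod 2) (V p)) :=
    Finite.of_injective (fun f => (f : V p → ZMod 2)) DFunLike.coe_injective
  have hinj : Function.Injective (Omega p) := by
    intro v v' h
    have hz : ∀ w, omega (v - v') w = 0 := by
      intro w
      have hvv : omega v w = omega v' w := DFunLike.congr_fun h w
      rw [sub_eq_add_neg, omega_add_left, omega_neg_left, hvv, zmod2_add_self]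
    have := Omega_nondeg.1 (v - v') (fun w => hz w)
    exact sub_eq_zero.mp this
  have hcard : Nat.card (V p) = Nat.card (Module.Dual (ZMod 2) (V p)) := by
    letI : Fintype (Module.Dual (ZMod 2) (V p)) := Fintype.ofFinite _
    rw [Nat.card_eq_fintype_card, Nat.card_eq_fintype_card,
      Module.card_eq_pow_finrank (K := ZMod 2) (V := V p),
      Module.card_eq_pow_finrank (K := ZMod 2) (V := Module.Dual (ZMod 2) (V p)),
      Subspace.dual_finrank_eq]
  have hbij : Function.Bijective (Omega p) :=
    (Nat.bijective_iff_injective_and_card (Omega p)).mpr ⟨hinj, hcard⟩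
  obtain ⟨v, hv⟩ := hbij.2 g
  exact ⟨v, fun w => by rw [← hv]; rfl⟩

lemma Kv_mem_GFam (Br : AddSubgroup (V p)) (v : V p) : Kv Br v ∈ GFam Br := by
  by_cases h : ∀ b ∈ Br, omega v b = 0
  · left
    ext b
    simp only [mem_Kv]
    exact ⟨fun hb => hb.1, fun hb => ⟨hb, h b hb⟩⟩
  · right
    push_neg at h
    obtain ⟨b₀, hb₀, hne⟩ := h
    refine ⟨fun b hb => hb.1, ?_⟩
    set f : ↥Br →+ ZMod 2 := AddMonoidHom.mk' (fun b => omega v (b : V p))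
      (fun a b => by simp [omega_add_right]) with hf
    have hker : f.ker = (Kv Br v).addSubgroupOf Br := by
      ext b
      simp only [AddMonoidHom.mem_ker, AddSubgroup.mem_addSubgroupOf, mem_Kv, hf,
        AddMonoidHom.mk'_apply]
      exact ⟨fun h0 => ⟨b.2, h0⟩, fun h0 => h0.2⟩
    have hrange : f.range = ⊤ := by
      rw [AddSubgroup.eq_top_iff']
      intro x
      rcases zmod2_cases x with rfl | rfl
      · exact zero_mem _
      · rcases zmod2_cases (omega v b₀) with h0 | h1
        · exact absurd h0 hne
        · exact ⟨⟨b₀, hb₀⟩, h1⟩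
    have hidx := AddSubgroup.index_ker f
    rw [hker, hrange] at hidx
    show ((Kv Br v).addSubgroupOf Br).index = 2
    rw [hidx, Nat.card_congr AddSubgroup.topEquiv.toEquiv, Nat.card_zmod]

lemma exists_Kv {Br B : AddSubgroup (V p)} (hB : B ∈ GFam Br) : ∃ v : V p, Kv Br v = B := by
  rcases hB with rfl | ⟨hle, hrel⟩
  · refine ⟨0, ?_⟩
    ext b
    simp [mem_Kv, omega_zero_left]
  · classical
    set H := B.addSubgroupOf Br with hH
    have hcard2 : Nat.card (↥Br ⧸ H) = 2 := hrel
    obtain ⟨x, y, hxy, huniv⟩ := Nat.card_eq_two_iff.mp hcard2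
    have hmem : ∀ z : ↥Br ⧸ H, z = x ∨ z = y := by
      intro z
      have : z ∈ ({x, y} : Set (↥Br ⧸ H)) := huniv ▸ Set.mem_univ z
      simpa using this
    have huniq : ∀ z w : ↥Br ⧸ H, z ≠ 0 → w ≠ 0 → z = w := by
      intro z w hz hw
      rcases hmem 0 with h0 | h0 <;> rcases hmem z with hz' | hz' <;>
        rcases hmem w with hw' | hw' <;> simp_all
    have hq : ∀ a : ↥Br, ((a : ↥Br ⧸ H) = 0 ↔ (a : V p) ∈ B) := by
      intro a
      rw [QuotientAddGroup.eq_zero_iff]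
      simp [hH, AddSubgroup.mem_addSubgroupOf]
    have hdouble : ∀ z : ↥Br ⧸ H, z + z = 0 := by
      intro z
      by_cases hz : z = 0
      · rw [hz, add_zero]
      · by_contra hzz
        have h1 : z + z = z := huniq _ _ hzz hz
        exact hz (add_eq_right.mp h1)
    have h11 : (1 : ZMod 2) + 1 = 0 := by decide
    -- the additive map `Br → ZMod 2` with kernel `B`
    set f : ↥Br →+ ZMod 2 := AddMonoidHom.mk'
      (fun b => if ((b : ↥Br ⧸ H)) = 0 then 0 else 1) (by
        intro a b
        have hab : ((a + b : ↥Br) : ↥Br ⧸ H) = (a : ↥Br ⧸ H) + (b : ↥Br ⧸ H) := rfl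
        by_cases ha : (a : ↥Br ⧸ H) = 0 <;> by_cases hb : (b : ↥Br ⧸ H) = 0
        · simp [hab, ha, hb]
        · simp [hab, ha, hb]
        · simp [hab, ha, hb]
        · have he : (a : ↥Br ⧸ H) = (b : ↥Br ⧸ H) := huniq _ _ ha hb
          have hzz : (a : ↥Br ⧸ H) + (b : ↥Br ⧸ H) = 0 := by
            rw [← he]; exact hdouble _
          simp [hab, hzz, ha, hb, h11]) with hfdef
    -- promote to a linear map on the submodule
    set S := toSub Br with hS
    set e : ↥S →+ ↥Br :=
      { toFun := fun x => ⟨x.1, x.2⟩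
        map_zero' := rfl
        map_add' := fun _ _ => rfl } with he
    set f' : S →ₗ[ZMod 2] ZMod 2 := (f.comp e).toZModLinearMap 2 with hf'
    obtain ⟨g, hg⟩ := LinearMap.exists_extend f'
    obtain ⟨v, hv⟩ := exists_omega_eq g
    refine ⟨v, ?_⟩
    ext b
    simp only [mem_Kv]
    constructor
    · rintro ⟨hb, h0⟩
      have : g b = f' ⟨b, hb⟩ := by
        have := DFunLike.congr_fun hg (⟨b, hb⟩ : S)
        simpa using this
      rw [hv b, this] at h0
      have h0' : (if (((⟨b, hb⟩ : ↥Br) : ↥Br ⧸ H)) = 0 then (0 : ZMod 2) else 1) = 0 := h0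
      by_cases hcond : ((⟨b, hb⟩ : ↥Br) : ↥Br ⧸ H) = 0
      · exact (hq ⟨b, hb⟩).mp hcond
      · rw [if_neg hcond] at h0'
        exact absurd h0' one_ne_zero
    · intro hb
      have hbBr : b ∈ Br := hle hb
      refine ⟨hbBr, ?_⟩
      have : g b = f' ⟨b, hbBr⟩ := by
        have := DFunLike.congr_fun hg (⟨b, hbBr⟩ : S)
        simpa using this
      rw [hv b, this]
      show (if (((⟨b, hbBr⟩ : ↥Br) : ↥Br ⧸ H)) = 0 then (0 : ZMod 2) else 1) = 0
      rw [if_pos ((hq ⟨b, hbBr⟩).mpr hb)]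

lemma Kv_eq_iff {Br : AddSubgroup (V p)} (v v' : V p) :
    Kv Br v = Kv Br v' ↔ v - v' ∈ Nperp Br := by
  constructor
  · intro h
    rw [mem_Nperp]
    intro b hb
    have hiff : (omega v b = 0 ↔ omega v' b = 0) := by
      have := SetLike.ext_iff.mp h b
      simp only [mem_Kv, hb, true_and] at this
      exact this
    have h1 : omega v b = omega v' b := zmod2_eq_of_iff hiff
    rw [sub_eq_add_neg, omega_add_left, omega_neg_left, h1, zmod2_add_self]
  · intro hn
    ext b
    simp only [mem_Kv, and_congr_right_iff]
    intro hb
    have h1 : omega v b = omega v' b := by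
      have h2 := (mem_Nperp.mp hn) b hb
      rw [sub_eq_add_neg, omega_add_left, omega_neg_left] at h2
      rcases zmod2_cases (omega v b) with ha | ha <;>
        rcases zmod2_cases (omega v' b) with hc | hc <;> simp_all
    rw [h1]

lemma wspace_coset {Br : AddSubgroup (V p)} (v : V p) :
    Wspace Br (Kv Br v) = (fun n => v + n) '' ((Nperp Br : Set (V p))) := by
  ext u
  rw [Set.mem_image]
  constructor
  · intro hu
    have hK : Kv Br u = Kv Br v := mem_Wspace.mp hu
    refine ⟨u - v, ?_, by abel⟩
    exact (Kv_eq_iff u v).mp hK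
  · rintro ⟨n, hn, rfl⟩
    apply mem_Wspace.mpr
    apply (Kv_eq_iff _ _).mpr
    have : v + n - v = n := by abel
    rw [this]
    exact hn

lemma card_Wspace {r : ℕ} (hr : r ≤ 2 * p) {Br : AddSubgroup (V p)} (hBr : IsRthMax r Br)
    {B : AddSubgroup (V p)} (hB : B ∈ GFam Br) :
    Nat.card (Wspace Br B) = 2 ^ r := by
  obtain ⟨v, rfl⟩ := exists_Kv hB
  rw [wspace_coset, Nat.card_image_of_injective (add_right_injective v)]
  rw [← card_Nperp hr hBr]
  exact Nat.card_congr (Equiv.subtypeEquivRight fun _ => Iff.rfl)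

lemma card_family {r : ℕ} (hr : r ≤ 2 * p) {Br : AddSubgroup (V p)} (hBr : IsRthMax r Br) :
    Nat.card {S : Set (V p) | ∃ B ∈ GFam Br, S = Wspace Br B} = 2 ^ (2 * p - r) := by
  classical
  set N := Nperp Br with hN
  let F : V p → {S : Set (V p) | ∃ B ∈ GFam Br, S = Wspace Br B} :=
    fun v => ⟨Wspace Br (Kv Br v), ⟨Kv Br v, Kv_mem_GFam Br v, rfl⟩⟩
  have hrel : ∀ a b : V p, a - b ∈ N → F a = F b := by
    intro a b hab
    apply Subtype.ext
    show Wspace Br (Kv Br a) = Wspace Br (Kv Br b)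
    rw [(Kv_eq_iff a b).mpr hab]
  let Fbar : (V p ⧸ N) → {S : Set (V p) | ∃ B ∈ GFam Br, S = Wspace Br B} :=
    fun q => Quotient.liftOn' q F (by
      intro a b hab
      apply hrel
      have h1 : -a + b ∈ N := QuotientAddGroup.leftRel_apply.mp hab
      have h2 : a - b = -(-a + b) := by abel
      rw [h2]
      exact neg_mem h1)
  have hFbar : ∀ v : V p, Fbar ((v : V p ⧸ N)) = F v := fun v => rfl
  have hbij : Function.Bijective Fbar := by
    constructor
    · intro q q'
      induction q using QuotientAddGroup.induction_on with | H v =>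
      induction q' using QuotientAddGroup.induction_on with | H v' =>
      intro h
      rw [hFbar, hFbar] at h
      have hW : Wspace Br (Kv Br v) = Wspace Br (Kv Br v') := congrArg Subtype.val h
      have hv : v ∈ Wspace Br (Kv Br v) := mem_Wspace.mpr rfl
      rw [hW] at hv
      have hK : Kv Br v = Kv Br v' := mem_Wspace.mp hv
      have := (Kv_eq_iff v v').mp hK
      apply (QuotientAddGroup.eq (s := N)).mpr
      have h2 : -v + v' = -(v - v') := by abel
      rw [h2]
      exact neg_mem this
    · rintro ⟨S, B, hB, rfl⟩
      obtain ⟨v, rfl⟩ := exists_Kv hB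
      exact ⟨(v : V p ⧸ N), rfl⟩
  have hcardeq : Nat.card {S : Set (V p) | ∃ B ∈ GFam Br, S = Wspace Br B}
      = Nat.card (V p ⧸ N) := (Nat.card_congr (Equiv.ofBijective Fbar hbij)).symm
  rw [hcardeq]
  have h1 := AddSubgroup.card_eq_card_quotient_mul_card_addSubgroup N
  rw [card_V, hN, card_Nperp hr hBr] at h1
  have h2 : 2 ^ (2 * p) = 2 ^ (2 * p - r) * 2 ^ r := by
    rw [← pow_add]
    congr 1
    omega
  rw [h2] at h1
  exact Nat.eq_of_mul_eq_mul_right (by positivity) h1.symm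

end Helpers

/-- the commutator rule decides a partition: the commutator subspaces
`W(B)`, `B ∈ 𝒢(B^[r])`, are pairwise disjoint, nonempty, cover `V`; there are


exactly `2^(2p−r)` of them and each has exactly `2^r` elements. -/
theorem commutator_partition {p r : ℕ} (hp : 1 ≤ p) (hr : r ≤ 2 * p)
    (Br : AddSubgroup (V p)) (hBr : IsRthMax r Br) :
    (∀ B₁ ∈ GFam Br, ∀ B₂ ∈ GFam Br, B₁ ≠ B₂ → Wspace Br B₁ ∩ Wspace Br B₂ = ∅) ∧
    (∀ B ∈ GFam Br, (Wspace Br B).Nonempty) ∧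
    (⋃ B ∈ GFam Br, Wspace Br B) = Set.univ ∧
    Nat.card {S : Set (V p) | ∃ B ∈ GFam Br, S = Wspace Br B} = 2 ^ (2 * p - r) ∧
    (∀ B ∈ GFam Br, Nat.card (Wspace Br B) = 2 ^ r) := by
  refine ⟨?_, ?_, ?_, card_family hr hBr, fun B hB => card_Wspace hr hBr hB⟩
  · intro B₁ h₁ B₂ h₂ hne
    ext u
    simp only [Set.mem_inter_iff, Set.mem_empty_iff_false, iff_false]
    rintro ⟨hu₁, hu₂⟩
    exact hne ((mem_Wspace.mp hu₁).symm.trans (mem_Wspace.mp hu₂))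
  · intro B hB
    obtain ⟨v, rfl⟩ := exists_Kv hB
    exact ⟨v, mem_Wspace.mpr rfl⟩
  · ext u
    simp only [Set.mem_iUnion, Set.mem_univ, iff_true]
    exact ⟨Kv Br u, Kv_mem_GFam Br u, mem_Wspace.mpr rfl⟩
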